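/- The 2-MVPA M over Σ̃₂ with state set {q₀,q₁,q₂,q₃,q₄,q₅,q₆,p}, single initial state q₀, stack alphabet {x,⊥}, final state set {p}, push transitions (q₀,a₁,q₁,x), (q₂,a₂,q₃,x), (q₄,a₂,q₆,x), (q₅,a₂,q₆,x), pop transitions (q₁,b₂,⊥,q₀), (q₃,b₁,x,q₂), (q₃,b₁,⊥,q₄), (q₆,b₁,⊥,q₅), and internal transitions (q₀,d,q₂), (q₂,c,p), (q₅,c,p), is deterministic and accepts exactly the language L₀ = {(a₁b₂)^i d (a₂b₁)^j c : i,j ≥ 0, j ≠ i+1}, where the accepted language is the set of 2-phase words on which M has an accepting run. -/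

import Mathlib

/-- The "kind" of a letter in an `n`-stack call-return alphabet: each letter is
either a call letter of stack `i`, a return letter of stack `i`, or internal. -/
inductive SymKind (n : ℕ) where
  | call (i : Fin n)
  | ret (i : Fin n)
  | internal
deriving DecidableEq

/-- A multi-stack visibly pushdown automaton over an `n`-stack call-return alphabet,
given by the letter type `A` together with the partition `kind : A → SymKind n`. -/
structure MVPA (A : Type) (n : ℕ) (kind : A → SymKind n) where
  /-- finite set of states -/
  Q : Type
  [finQ : Fintype Q]
  /-- initial states -/
  QI : Set Q
  /-- finite stack alphabet -/
  Γ : Type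
  [finΓ : Fintype Γ]
  /-- distinguished bottom-of-stack symbol -/
  bot : Γ
  /-- push transitions `(q, a, q', γ)` for call letters `a` -/
  δpush : Q → A → Q → Γ → Prop
  /-- pop transitions `(q, a, γ, q')` for return letters `a` -/
  δpop : Q → A → Γ → Q → Prop
  /-- internal transitions `(q, a, q')` for internal letters `a` -/
  δint : Q → A → Q → Prop
  /-- final states -/
  QF : Set Q
  push_call : ∀ q a q' γ, δpush q a q' γ → (∃ i, kind a = .call i) ∧ γ ≠ bot
  pop_ret : ∀ q a γ q', δpop q a γ q' → ∃ i, kind a = .ret i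
  int_internal : ∀ q a q', δint q a q' → kind a = .internal

namespace MVPA

variable {A : Type} {n : ℕ} {kind : A → SymKind n}

/-- A configuration: a state together with the contents of the `n` stacks.
A stack is represented by the list of its symbols above the (implicit) bottom
symbol `⊥`; i.e. a stack word `γ₁⋯γ_m⊥ ∈ (Γ∖{⊥})*·{⊥}` is represented
as the list `[γ₁, …, γ_m]`. -/
abbrev Config (M : MVPA A n kind) : Type := M.Q × (Fin n → List M.Γ)

/-- One step of the automaton on letter `a`. -/
inductive Step (M : MVPA A n kind) : M.Config → A → M.Config → Prop where
  | push {q a q' γ C i} : kind a = .call i → M.δpush q a q' γ →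
      Step M (q, C) a (q', Function.update C i (γ :: C i))
  | popEmpty {q a q' C i} : kind a = .ret i → M.δpop q a M.bot q' → C i = [] →
      Step M (q, C) a (q', C)
  | pop {q a γ q'} {C C' : Fin n → List M.Γ} {i} : kind a = .ret i → M.δpop q a γ q' →
      γ ≠ M.bot → C i = γ :: C' i → (∀ j, j ≠ i → C' j = C j) →
      Step M (q, C) a (q', C')
  | internal {q a q' C} : kind a = .internal → M.δint q a q' →
      Step M (q, C) a (q', C)

/-- A run of the automaton on a word, from one configuration to another. -/
inductive Run (M : MVPA A n kind) : M.Config → List A → M.Config → Prop where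
  | nil (c) : Run M c [] c
  | cons {c₁ a c₂ w c₃} : Step M c₁ a c₂ → Run M c₂ w c₃ → Run M c₁ (a :: w) c₃

/-- There is an accepting run of `M` on `w`: a run starting in an initial state with
all stacks empty (i.e. containing just `⊥`) and ending in a final state. -/
def Accepts (M : MVPA A n kind) (w : List A) : Prop :=
  ∃ q₀ ∈ M.QI, ∃ c : M.Config, Run M (q₀, fun _ => []) w c ∧ c.1 ∈ M.QF

end MVPA

/-- A word is a phase if all return letters occurring in it belong to a single `Σ^i_r`. -/
def IsPhase {A : Type} {n : ℕ} (kind : A → SymKind n) (w : List A) : Prop :=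
  ∃ i : ℕ, ∀ a ∈ w, ∀ j : Fin n, kind a = .ret j → (j : ℕ) = i

/-- A word is a `k`-phase if it is a concatenation of at most `k` phases. -/
def IsKPhase {A : Type} {n : ℕ} (kind : A → SymKind n) (k : ℕ) (w : List A) : Prop :=
  ∃ ws : List (List A), ws.length ≤ k ∧ (∀ u ∈ ws, IsPhase kind u) ∧ ws.flatten = w

namespace MVPA

variable {A : Type} {n : ℕ} {kind : A → SymKind n}

/-- The language of `M`, viewed as a `k`-MVPA: the set of `k`-phase words on which
`M` has an accepting run. -/
def lang (M : MVPA A n kind) (k : ℕ) : Set (List A) :=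
  {w | IsKPhase kind k w ∧ M.Accepts w}

/-- `M` is deterministic: a unique initial state, and for each state `q`, letter `a`
and stack symbol `γ`, at most one transition of `δ` is applicable. -/
def Deterministic (M : MVPA A n kind) : Prop :=
  (∃ q, M.QI = {q}) ∧
  (∀ q a q₁ γ₁ q₂ γ₂, M.δpush q a q₁ γ₁ → M.δpush q a q₂ γ₂ → q₁ = q₂ ∧ γ₁ = γ₂) ∧
  (∀ q a γ q₁ q₂, M.δpop q a γ q₁ → M.δpop q a γ q₂ → q₁ = q₂) ∧
  (∀ q a q₁ q₂, M.δint q a q₁ → M.δint q a q₂ → q₁ = q₂)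

end MVPA

/-- The six-letter alphabet `Σ = {a₁, a₂, b₁, b₂, c, d}`. -/
inductive Letter where
  | a1 | a2 | b1 | b2 | c | d
deriving DecidableEq

instance : Fintype Letter :=
  ⟨{.a1, .a2, .b1, .b2, .c, .d}, by intro x; cases x <;> simp⟩

/-- The 2-stack call-return alphabet `Σ̃₂`: `Σ¹_c = {a₁}`, `Σ²_c = {a₂}`,
`Σ¹_r = {b₁}`, `Σ²_r = {b₂}`, `Σ_int = {c, d}`. -/
def kind2 : Letter → SymKind 2
  | .a1 => .call 0
  | .a2 => .call 1
  | .b1 => .ret 0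
  | .b2 => .ret 1
  | .c => .internal
  | .d => .internal

/-- `w^i`: the `i`-fold concatenation of the word `w`. -/
def wpow (w : List Letter) (i : ℕ) : List Letter :=
  (List.replicate i w).flatten


/-- The state set `{q₀, q₁, q₂, q₃, q₄, q₅, q₆, p}`. -/
inductive St where
  | q0 | q1 | q2 | q3 | q4 | q5 | q6 | p
deriving DecidableEq

instance : Fintype St :=
  ⟨{.q0, .q1, .q2, .q3, .q4, .q5, .q6, .p}, by intro x; cases x <;> simp⟩

/-- The stack alphabet `{x, ⊥}`. -/
inductive Gam where
  | x | bot
deriving DecidableEq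

instance : Fintype Gam :=
  ⟨{.x, .bot}, by intro x; cases x <;> simp⟩

/-- The 2-MVPA of Figure 1, recognizing `L₀ = {(a₁b₂)^i d (a₂b₁)^j c : i,j ≥ 0, j ≠ i+1}`. -/
def M1 : MVPA Letter 2 kind2 where
  Q := St
  QI := {.q0}
  Γ := Gam
  bot := .bot
  δpush := fun q a q' γ =>
    (q = .q0 ∧ a = .a1 ∧ q' = .q1 ∧ γ = .x) ∨
    (q = .q2 ∧ a = .a2 ∧ q' = .q3 ∧ γ = .x) ∨
    (q = .q4 ∧ a = .a2 ∧ q' = .q6 ∧ γ = .x) ∨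
    (q = .q5 ∧ a = .a2 ∧ q' = .q6 ∧ γ = .x)
  δpop := fun q a γ q' =>
    (q = .q1 ∧ a = .b2 ∧ γ = .bot ∧ q' = .q0) ∨
    (q = .q3 ∧ a = .b1 ∧ γ = .x ∧ q' = .q2) ∨
    (q = .q3 ∧ a = .b1 ∧ γ = .bot ∧ q' = .q4) ∨
    (q = .q6 ∧ a = .b1 ∧ γ = .bot ∧ q' = .q5)
  δint := fun q a q' =>
    (q = .q0 ∧ a = .d ∧ q' = .q2) ∨
    (q = .q2 ∧ a = .c ∧ q' = .p) ∨
    (q = .q5 ∧ a = .c ∧ q' = .p)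
  QF := {.p}
  push_call := by
    rintro q a q' γ (⟨rfl, rfl, rfl, rfl⟩ | ⟨rfl, rfl, rfl, rfl⟩ |
      ⟨rfl, rfl, rfl, rfl⟩ | ⟨rfl, rfl, rfl, rfl⟩) <;>
    exact ⟨⟨_, rfl⟩, by decide⟩
  pop_ret := by
    rintro q a γ q' (⟨rfl, rfl, rfl, rfl⟩ | ⟨rfl, rfl, rfl, rfl⟩ |
      ⟨rfl, rfl, rfl, rfl⟩ | ⟨rfl, rfl, rfl, rfl⟩) <;>
    exact ⟨_, rfl⟩
  int_internal := by
    rintro q a q' (⟨rfl, rfl, rfl⟩ | ⟨rfl, rfl, rfl⟩ | ⟨rfl, rfl, rfl⟩) <;> rfl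


section Aux

open Letter St Gam List

@[simp] lemma wpow_zero (w : List Letter) : wpow w 0 = [] := rfl

@[simp] lemma wpow_succ (w : List Letter) (i : ℕ) : wpow w (i+1) = w ++ wpow w i := by
  simp [wpow, List.replicate_succ]

/-- A configuration of `M1` with stacks `x^a` and `x^b`. -/
def cfg (s : St) (a b : ℕ) : M1.Config :=
  (s, ![List.replicate a Gam.x, List.replicate b Gam.x])

lemma upd0 {α : Type*} (u v w : α) :
    Function.update (![u, v] : Fin 2 → α) 0 w = ![w, v] := by
  funext k; fin_cases k <;> simp [Function.update]

lemma upd1 {α : Type*} (u v w : α) :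
    Function.update (![u, v] : Fin 2 → α) 1 w = ![u, w] := by
  funext k; fin_cases k <;> simp [Function.update]

lemma step_a1 (a b : ℕ) : M1.Step (cfg .q0 a b) .a1 (cfg .q1 (a+1) b) := by
  have h := MVPA.Step.push (M := M1) (q := St.q0) (a := Letter.a1) (q' := St.q1)
    (γ := Gam.x) (C := ![List.replicate a Gam.x, List.replicate b Gam.x]) (i := 0) rfl
    (Or.inl ⟨rfl, rfl, rfl, rfl⟩)
  rw [upd0] at h
  exact h

lemma step_a2_2 (a b : ℕ) : M1.Step (cfg .q2 a b) .a2 (cfg .q3 a (b+1)) := by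
  have h := MVPA.Step.push (M := M1) (q := St.q2) (a := Letter.a2) (q' := St.q3)
    (γ := Gam.x) (C := ![List.replicate a Gam.x, List.replicate b Gam.x]) (i := 1) rfl
    (Or.inr (Or.inl ⟨rfl, rfl, rfl, rfl⟩))
  rw [upd1] at h
  exact h

lemma step_a2_4 (a b : ℕ) : M1.Step (cfg .q4 a b) .a2 (cfg .q6 a (b+1)) := by
  have h := MVPA.Step.push (M := M1) (q := St.q4) (a := Letter.a2) (q' := St.q6)
    (γ := Gam.x) (C := ![List.replicate a Gam.x, List.replicate b Gam.x]) (i := 1) rfl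
    (Or.inr (Or.inr (Or.inl ⟨rfl, rfl, rfl, rfl⟩)))
  rw [upd1] at h
  exact h

lemma step_a2_5 (a b : ℕ) : M1.Step (cfg .q5 a b) .a2 (cfg .q6 a (b+1)) := by
  have h := MVPA.Step.push (M := M1) (q := St.q5) (a := Letter.a2) (q' := St.q6)
    (γ := Gam.x) (C := ![List.replicate a Gam.x, List.replicate b Gam.x]) (i := 1) rfl
    (Or.inr (Or.inr (Or.inr ⟨rfl, rfl, rfl, rfl⟩)))
  rw [upd1] at h
  exact h

lemma step_b2 (a : ℕ) : M1.Step (cfg .q1 a 0) .b2 (cfg .q0 a 0) :=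
  MVPA.Step.popEmpty (i := 1) rfl (Or.inl ⟨rfl, rfl, rfl, rfl⟩) rfl

lemma step_b1_pop (a b : ℕ) : M1.Step (cfg .q3 (a+1) b) .b1 (cfg .q2 a b) := by
  have hne : (Gam.x : M1.Γ) ≠ M1.bot := fun h => Gam.noConfusion h
  have hC : (![List.replicate (a+1) Gam.x, List.replicate b Gam.x] : Fin 2 → List Gam) 0
      = Gam.x :: (![List.replicate a Gam.x, List.replicate b Gam.x] : Fin 2 → List Gam) 0 := by
    simp [List.replicate_succ]
  have hC' : ∀ j : Fin 2, j ≠ 0 →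
      (![List.replicate a Gam.x, List.replicate b Gam.x] : Fin 2 → List Gam) j
        = (![List.replicate (a+1) Gam.x, List.replicate b Gam.x] : Fin 2 → List Gam) j := by
    intro j hj
    fin_cases j
    · exact absurd rfl hj
    · rfl
  exact MVPA.Step.pop (M := M1) (q := St.q3) (a := Letter.b1) (γ := Gam.x) (q' := St.q2)
    (C := ![List.replicate (a+1) Gam.x, List.replicate b Gam.x])
    (C' := ![List.replicate a Gam.x, List.replicate b Gam.x]) (i := 0) rfl
    (Or.inr (Or.inl ⟨rfl, rfl, rfl, rfl⟩)) hne hC hC'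

lemma step_b1_34 (b : ℕ) : M1.Step (cfg .q3 0 b) .b1 (cfg .q4 0 b) :=
  MVPA.Step.popEmpty (i := 0) rfl (Or.inr (Or.inr (Or.inl ⟨rfl, rfl, rfl, rfl⟩))) rfl

lemma step_b1_65 (b : ℕ) : M1.Step (cfg .q6 0 b) .b1 (cfg .q5 0 b) :=
  MVPA.Step.popEmpty (i := 0) rfl (Or.inr (Or.inr (Or.inr ⟨rfl, rfl, rfl, rfl⟩))) rfl

lemma step_d (a b : ℕ) : M1.Step (cfg .q0 a b) .d (cfg .q2 a b) :=
  MVPA.Step.internal rfl (Or.inl ⟨rfl, rfl, rfl⟩)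

lemma step_c2 (a b : ℕ) : M1.Step (cfg .q2 a b) .c (cfg .p a b) :=
  MVPA.Step.internal rfl (Or.inr (Or.inl ⟨rfl, rfl, rfl⟩))

lemma step_c5 (a b : ℕ) : M1.Step (cfg .q5 a b) .c (cfg .p a b) :=
  MVPA.Step.internal rfl (Or.inr (Or.inr ⟨rfl, rfl, rfl⟩))

/-- Inversion of a single step of `M1` from a configuration of the form `cfg s a b`. -/
lemma step_inv {s : St} {a b : ℕ} {l : Letter} {c₂ : M1.Config}
    (h : M1.Step (cfg s a b) l c₂) :
    (s = .q0 ∧ l = .a1 ∧ c₂ = cfg .q1 (a+1) b) ∨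
    (s = .q2 ∧ l = .a2 ∧ c₂ = cfg .q3 a (b+1)) ∨
    (s = .q4 ∧ l = .a2 ∧ c₂ = cfg .q6 a (b+1)) ∨
    (s = .q5 ∧ l = .a2 ∧ c₂ = cfg .q6 a (b+1)) ∨
    (s = .q1 ∧ l = .b2 ∧ b = 0 ∧ c₂ = cfg .q0 a b) ∨
    (s = .q3 ∧ l = .b1 ∧ ∃ a', a = a' + 1 ∧ c₂ = cfg .q2 a' b) ∨
    (s = .q3 ∧ l = .b1 ∧ a = 0 ∧ c₂ = cfg .q4 a b) ∨
    (s = .q6 ∧ l = .b1 ∧ a = 0 ∧ c₂ = cfg .q5 a b) ∨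
    (s = .q0 ∧ l = .d ∧ c₂ = cfg .q2 a b) ∨
    (s = .q2 ∧ l = .c ∧ c₂ = cfg .p a b) ∨
    (s = .q5 ∧ l = .c ∧ c₂ = cfg .p a b) := by
  cases h with
  | push hk hδ =>
    rcases hδ with ⟨rfl, rfl, rfl, rfl⟩ | ⟨rfl, rfl, rfl, rfl⟩ |
      ⟨rfl, rfl, rfl, rfl⟩ | ⟨rfl, rfl, rfl, rfl⟩
    · rename_i i
      obtain rfl : (0 : Fin 2) = i := by injection hk
      refine Or.inl ⟨rfl, rfl, ?_⟩
      rw [upd0]; rfl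
    · rename_i i
      obtain rfl : (1 : Fin 2) = i := by injection hk
      refine Or.inr (Or.inl ⟨rfl, rfl, ?_⟩)
      rw [upd1]; rfl
    · rename_i i
      obtain rfl : (1 : Fin 2) = i := by injection hk
      refine Or.inr (Or.inr (Or.inl ⟨rfl, rfl, ?_⟩))
      rw [upd1]; rfl
    · rename_i i
      obtain rfl : (1 : Fin 2) = i := by injection hk
      refine Or.inr (Or.inr (Or.inr (Or.inl ⟨rfl, rfl, ?_⟩)))
      rw [upd1]; rfl
  | popEmpty hk hδ hC =>
    rcases hδ with ⟨rfl, rfl, hγ, rfl⟩ | ⟨rfl, rfl, hγ, rfl⟩ |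
      ⟨rfl, rfl, hγ, rfl⟩ | ⟨rfl, rfl, hγ, rfl⟩
    · rename_i i
      obtain rfl : (1 : Fin 2) = i := by injection hk
      have hb : b = 0 := by
        have h2 : (List.replicate b Gam.x).length = 0 := congrArg List.length hC
        simpa using h2
      exact Or.inr (Or.inr (Or.inr (Or.inr (Or.inl ⟨rfl, rfl, hb, rfl⟩))))
    · exact absurd hγ (fun h => Gam.noConfusion h)
    · rename_i i
      obtain rfl : (0 : Fin 2) = i := by injection hk
      have ha : a = 0 := by
        have h2 : (List.replicate a Gam.x).length = 0 := congrArg List.length hC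
        simpa using h2
      exact Or.inr (Or.inr (Or.inr (Or.inr (Or.inr (Or.inr (Or.inl ⟨rfl, rfl, ha, rfl⟩))))))
    · rename_i i
      obtain rfl : (0 : Fin 2) = i := by injection hk
      have ha : a = 0 := by
        have h2 : (List.replicate a Gam.x).length = 0 := congrArg List.length hC
        simpa using h2
      exact Or.inr (Or.inr (Or.inr (Or.inr (Or.inr (Or.inr (Or.inr (Or.inl
        ⟨rfl, rfl, ha, rfl⟩)))))))
  | pop hk hδ hne hC hC' =>
    rcases hδ with ⟨rfl, rfl, hγ, rfl⟩ | ⟨rfl, rfl, rfl, rfl⟩ |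
      ⟨rfl, rfl, hγ, rfl⟩ | ⟨rfl, rfl, hγ, rfl⟩
    · exact absurd hγ hne
    · rename_i C' i
      obtain rfl : (0 : Fin 2) = i := by injection hk
      rcases a with _ | a'
      · exact absurd hC (by simp)
      · refine Or.inr (Or.inr (Or.inr (Or.inr (Or.inr (Or.inl ⟨rfl, rfl, a', rfl, ?_⟩)))))
        have h0 : C' 0 = List.replicate a' Gam.x := by
          have hC2 : List.replicate (a' + 1) Gam.x = Gam.x :: C' 0 := hC
          rw [List.replicate_succ] at hC2
          injection hC2 with _ h2
          exact h2.symm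
        have h1 : C' 1 = List.replicate b Gam.x := hC' 1 (by decide)
        refine Prod.ext rfl ?_
        funext k
        fin_cases k
        · exact h0
        · exact h1
    · exact absurd hγ hne
    · exact absurd hγ hne
  | internal hk hδ =>
    rcases hδ with ⟨rfl, rfl, rfl⟩ | ⟨rfl, rfl, rfl⟩ | ⟨rfl, rfl, rfl⟩
    · exact Or.inr (Or.inr (Or.inr (Or.inr (Or.inr (Or.inr (Or.inr (Or.inr (Or.inl
        ⟨rfl, rfl, rfl⟩))))))))
    · exact Or.inr (Or.inr (Or.inr (Or.inr (Or.inr (Or.inr (Or.inr (Or.inr (Or.inr (Or.inl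
        ⟨rfl, rfl, rfl⟩)))))))))
    · exact Or.inr (Or.inr (Or.inr (Or.inr (Or.inr (Or.inr (Or.inr (Or.inr (Or.inr (Or.inr
        ⟨rfl, rfl, rfl⟩)))))))))

/-- The accepting suffix language from each state (with `a` the number of `x`'s on stack 1). -/
def spec : St → ℕ → List Letter → Prop
  | .q0, a, w => ∃ i j, j ≠ a + i + 1 ∧
      w = wpow [.a1, .b2] i ++ [.d] ++ wpow [.a2, .b1] j ++ [.c]
  | .q1, a, w => ∃ i j, j ≠ a + i + 1 ∧
      w = .b2 :: (wpow [.a1, .b2] i ++ [.d] ++ wpow [.a2, .b1] j ++ [.c])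
  | .q2, a, w => ∃ j, j ≠ a + 1 ∧ w = wpow [.a2, .b1] j ++ [.c]
  | .q3, a, w => ∃ j, j ≠ a ∧ w = .b1 :: (wpow [.a2, .b1] j ++ [.c])
  | .q4, _, w => ∃ j, 1 ≤ j ∧ w = wpow [.a2, .b1] j ++ [.c]
  | .q5, _, w => ∃ j, w = wpow [.a2, .b1] j ++ [.c]
  | .q6, _, w => ∃ j, w = .b1 :: (wpow [.a2, .b1] j ++ [.c])
  | .p, _, w => w = []

lemma master : ∀ (w : List Letter) (s : St) (a b : ℕ) (c' : M1.Config),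
    M1.Run (cfg s a b) w c' → c'.1 = .p → spec s a w := by
  intro w
  induction w with
  | nil =>
    intro s a b c' hrun hp
    cases hrun
    obtain rfl : s = .p := hp
    simp only [spec]
  | cons l w ih =>
    intro s a b c' hrun hp
    cases hrun with
    | cons hstep hrun2 =>
    rcases step_inv hstep with
      ⟨rfl, rfl, rfl⟩ | ⟨rfl, rfl, rfl⟩ | ⟨rfl, rfl, rfl⟩ | ⟨rfl, rfl, rfl⟩ |
      ⟨rfl, rfl, hb, rfl⟩ | ⟨rfl, rfl, a', rfl, rfl⟩ | ⟨rfl, rfl, ha, rfl⟩ |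
      ⟨rfl, rfl, ha, rfl⟩ | ⟨rfl, rfl, rfl⟩ | ⟨rfl, rfl, rfl⟩ | ⟨rfl, rfl, rfl⟩ <;>
      have H := ih _ _ _ _ hrun2 hp <;> simp only [spec] at H ⊢
    · obtain ⟨i, j, hj, rfl⟩ := H
      exact ⟨i + 1, j, by omega, by simp⟩
    · obtain ⟨j, hj, rfl⟩ := H
      exact ⟨j + 1, by omega, by simp⟩
    · obtain ⟨j, hj, rfl⟩ := H
      exact ⟨j + 1, by omega, by simp⟩
    · obtain ⟨j, rfl⟩ := H
      exact ⟨j + 1, by simp⟩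
    · obtain ⟨i, j, hj, rfl⟩ := H
      exact ⟨i, j, hj, rfl⟩
    · obtain ⟨j, hj, rfl⟩ := H
      exact ⟨j, by omega, rfl⟩
    · subst ha
      obtain ⟨j, hj, rfl⟩ := H
      exact ⟨j, by omega, rfl⟩
    · obtain ⟨j, rfl⟩ := H
      exact ⟨j, rfl⟩
    · obtain ⟨j, hj, rfl⟩ := H
      exact ⟨0, j, by omega, by simp⟩
    · subst H
      exact ⟨0, by omega, by simp⟩
    · subst H
      exact ⟨0, by simp⟩

lemma run_q5 : ∀ (j b : ℕ), ∃ c' : M1.Config,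
    M1.Run (cfg .q5 0 b) (wpow [.a2, .b1] j ++ [.c]) c' ∧ c'.1 = .p := by
  intro j
  induction j with
  | zero =>
    intro b
    exact ⟨cfg .p 0 b, .cons (step_c5 0 b) (.nil _), rfl⟩
  | succ j ih =>
    intro b
    obtain ⟨c', hr, hp⟩ := ih (b + 1)
    refine ⟨c', ?_, hp⟩
    have h := MVPA.Run.cons (step_a2_5 0 b) (MVPA.Run.cons (step_b1_65 (b + 1)) hr)
    simpa using h

lemma run_q2 : ∀ (j a b : ℕ), j ≠ a + 1 → ∃ c' : M1.Config,
    M1.Run (cfg .q2 a b) (wpow [.a2, .b1] j ++ [.c]) c' ∧ c'.1 = .p := by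
  intro j
  induction j with
  | zero =>
    intro a b _
    exact ⟨cfg .p a b, .cons (step_c2 a b) (.nil _), rfl⟩
  | succ j ih =>
    intro a b hj
    rcases a with _ | a'
    · rcases j with _ | j'
      · omega
      · obtain ⟨c', hr, hp⟩ := run_q5 j' (b + 2)
        refine ⟨c', ?_, hp⟩
        have h := MVPA.Run.cons (step_a2_2 0 b) (MVPA.Run.cons (step_b1_34 (b + 1))
          (MVPA.Run.cons (step_a2_4 0 (b + 1)) (MVPA.Run.cons (step_b1_65 (b + 2)) hr)))
        simpa using h
    · obtain ⟨c', hr, hp⟩ := ih a' (b + 1) (by omega)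
      refine ⟨c', ?_, hp⟩
      have h := MVPA.Run.cons (step_a2_2 (a' + 1) b)
        (MVPA.Run.cons (step_b1_pop a' (b + 1)) hr)
      simpa using h

lemma run_q0 : ∀ (i a j : ℕ), j ≠ a + i + 1 → ∃ c' : M1.Config,
    M1.Run (cfg .q0 a 0) (wpow [.a1, .b2] i ++ [.d] ++ wpow [.a2, .b1] j ++ [.c]) c' ∧
      c'.1 = .p := by
  intro i
  induction i with
  | zero =>
    intro a j hj
    obtain ⟨c', hr, hp⟩ := run_q2 j a 0 (by omega)
    refine ⟨c', ?_, hp⟩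
    have h := MVPA.Run.cons (step_d a 0) hr
    simpa using h
  | succ i ih =>
    intro a j hj
    obtain ⟨c', hr, hp⟩ := ih (a + 1) j (by omega)
    refine ⟨c', ?_, hp⟩
    have h := MVPA.Run.cons (step_a1 a 0) (MVPA.Run.cons (step_b2 (a + 1)) hr)
    simpa using h

lemma mem_wpow {l : Letter} {w : List Letter} {i : ℕ} (h : l ∈ wpow w i) : l ∈ w := by
  simp only [wpow, List.mem_flatten] at h
  obtain ⟨u, hu, hl⟩ := h
  rw [List.eq_of_mem_replicate hu] at hl
  exact hl

end Aux

/-- The 2-MVPA `M1` is deterministic and accepts exactly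
`L₀ = {(a₁b₂)^i d (a₂b₁)^j c : i, j ≥ 0, j ≠ i+1}`. -/
theorem M1_deterministic_and_lang :
    M1.Deterministic ∧
    M1.lang 2 = {w | ∃ i j : ℕ, j ≠ i + 1 ∧
      w = wpow [.a1, .b2] i ++ [.d] ++ wpow [.a2, .b1] j ++ [.c]} := by
  constructor
  · refine ⟨⟨.q0, rfl⟩, ?_, ?_, ?_⟩
    · rintro q a q₁ γ₁ q₂ γ₂ (⟨rfl, rfl, rfl, rfl⟩ | ⟨rfl, rfl, rfl, rfl⟩ |
        ⟨rfl, rfl, rfl, rfl⟩ | ⟨rfl, rfl, rfl, rfl⟩) h2 <;>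
        rcases h2 with h2 | h2 | h2 | h2 <;> simp_all <;> trivial
    · rintro q a γ q₁ q₂ (⟨rfl, rfl, rfl, rfl⟩ | ⟨rfl, rfl, rfl, rfl⟩ |
        ⟨rfl, rfl, rfl, rfl⟩ | ⟨rfl, rfl, rfl, rfl⟩) h2 <;>
        rcases h2 with h2 | h2 | h2 | h2 <;> simp_all <;> trivial
    · rintro q a q₁ q₂ (⟨rfl, rfl, rfl⟩ | ⟨rfl, rfl, rfl⟩ | ⟨rfl, rfl, rfl⟩) h2 <;>
        rcases h2 with h2 | h2 | h2 <;> simp_all <;> trivial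
  · have hinit : ((St.q0, fun _ => []) : M1.Config) = cfg .q0 0 0 := by
      refine Prod.ext rfl ?_
      funext k
      fin_cases k <;> rfl
    ext w
    simp only [MVPA.lang, Set.mem_setOf_eq]
    constructor
    · rintro ⟨-, q₀, hq₀, c', hrun, hf⟩
      obtain rfl : q₀ = .q0 := hq₀
      rw [hinit] at hrun
      have hp : c'.1 = .p := hf
      have H := master w .q0 0 0 c' hrun hp
      simp only [spec] at H
      obtain ⟨i, j, hj, rfl⟩ := H
      exact ⟨i, j, by omega, rfl⟩
    · rintro ⟨i, j, hj, rfl⟩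
      constructor
      · refine ⟨[wpow [.a1, .b2] i ++ [.d], wpow [.a2, .b1] j ++ [.c]],
          by norm_num, ?_, by simp⟩
        intro u hu
        simp only [List.mem_cons, List.not_mem_nil, or_false] at hu
        rcases hu with rfl | rfl
        · refine ⟨1, fun a ha k hk => ?_⟩
          have hmem : a = .a1 ∨ a = .b2 ∨ a = .d := by
            rcases List.mem_append.mp ha with h | h
            · have := mem_wpow h
              simp at this
              tauto
            · simp at h
              tauto
          rcases hmem with rfl | rfl | rfl <;> fin_cases k <;> simp_all [kind2]
        · refine ⟨0, fun a ha k hk => ?_⟩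
          have hmem : a = .a2 ∨ a = .b1 ∨ a = .c := by
            rcases List.mem_append.mp ha with h | h
            · have := mem_wpow h
              simp at this
              tauto
            · simp at h
              tauto
          rcases hmem with rfl | rfl | rfl <;> fin_cases k <;> simp_all [kind2]
      · obtain ⟨c', hr, hp⟩ := run_q0 i 0 j (by omega)
        refine ⟨.q0, rfl, c', ?_, hp⟩
        rw [hinit]
        exact hr
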